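/- Let M be a finite monoid and s,t ∈ M such that t ≤_J s (i.e., t = x s y for some x,y ∈ M). If s ≤_R t (i.e., s = t y' for some y'), then s R t (i.e., also t ≤_R s). Similarly, if s ≤_L t, then s L t. -/
import Mathlib

/-- In a finite monoid, every element has an idempotent positive power. -/
lemma exists_idem_pow_aux {M : Type*} [Monoid M] [Finite M] (a : M) :
    ∃ n, 0 < n ∧ a ^ n * a ^ n = a ^ n := by
  obtain ⟨i, j, hlt, heq⟩ : ∃ i j : ℕ, i < j ∧ a ^ i = a ^ j := by
    obtain ⟨i, j, hne, h⟩ := Finite.exists_ne_map_eq_of_infinite (fun n : ℕ => a ^ n)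
    rcases lt_or_gt_of_ne hne with h' | h'
    · exact ⟨i, j, h', h⟩
    · exact ⟨j, i, h', h.symm⟩
  set d := j - i with hd
  have hdpos : 0 < d := by omega
  have step : ∀ m, i ≤ m → a ^ (m + d) = a ^ m := by
    intro m hm
    have h1 : m + d = (m - i) + j := by omega
    have h2 : m = (m - i) + i := by omega
    rw [h1, pow_add, ← heq, ← pow_add, ← h2]
  have key : ∀ k m, i ≤ m → a ^ (m + k * d) = a ^ m := by
    intro k
    induction k with
    | zero => simp
    | succ k ih =>
      intro m hm
      have : m + (k + 1) * d = (m + k * d) + d := by ring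
      rw [this, step (m + k * d) (by omega), ih m hm]
  refine ⟨(i + 1) * d, by positivity, ?_⟩
  have hge : i ≤ (i + 1) * d :=
    le_trans (by omega) (Nat.le_mul_of_pos_right (i + 1) hdpos)
  rw [← pow_add]
  exact key (i + 1) ((i + 1) * d) hge

theorem stmt_0 {M : Type*} [Monoid M] [Fintype M] (s t : M)
    (hJ : ∃ x y : M, t = x * s * y) :
    ((∃ y' : M, s = t * y') → (∃ y'' : M, t = s * y'')) ∧
    ((∃ x' : M, s = x' * t) → (∃ x'' : M, t = x'' * s)) := by
  obtain ⟨x, y, hxy⟩ := hJ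
  constructor
  · rintro ⟨y', hy'⟩
    -- t = x * t * (y' * y), iterate
    have hiter : ∀ n : ℕ, t = x ^ n * t * (y' * y) ^ n := by
      intro n
      induction n with
      | zero => simp
      | succ n ih =>
        calc t = x * s * y := hxy
          _ = x * (t * y') * y := by rw [hy']
          _ = x * ((x ^ n * t * (y' * y) ^ n) * y') * y := by rw [← ih]
          _ = x ^ (n + 1) * t * (y' * y) ^ (n + 1) := by
              rw [pow_succ' x, pow_succ (y' * y)]
              simp only [mul_assoc]
    obtain ⟨n, hn, hidem⟩ := exists_idem_pow_aux (y' * y)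
    have habs : t * (y' * y) ^ n = t := by
      conv_lhs => rw [hiter n]
      rw [mul_assoc, hidem]
      exact (hiter n).symm
    obtain ⟨m, rfl⟩ : ∃ m, n = m + 1 := ⟨n - 1, by omega⟩
    refine ⟨y * (y' * y) ^ m, ?_⟩
    calc t = t * (y' * y) ^ (m + 1) := habs.symm
      _ = t * ((y' * y) * (y' * y) ^ m) := by rw [pow_succ']
      _ = (t * y') * (y * (y' * y) ^ m) := by simp only [mul_assoc]
      _ = s * (y * (y' * y) ^ m) := by rw [← hy']
  · rintro ⟨x', hx'⟩
    have hiter : ∀ n : ℕ, t = (x * x') ^ n * t * y ^ n := by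
      intro n
      induction n with
      | zero => simp
      | succ n ih =>
        calc t = x * s * y := hxy
          _ = x * (x' * t) * y := by rw [hx']
          _ = x * (x' * ((x * x') ^ n * t * y ^ n)) * y := by rw [← ih]
          _ = (x * x') ^ (n + 1) * t * y ^ (n + 1) := by
              rw [pow_succ' (x * x'), pow_succ y]
              simp only [mul_assoc]
    obtain ⟨n, hn, hidem⟩ := exists_idem_pow_aux (x * x')
    have habs : (x * x') ^ n * t = t := by
      conv_lhs => rw [hiter n]
      rw [← mul_assoc, ← mul_assoc, hidem]
      exact (hiter n).symm
    obtain ⟨m, rfl⟩ : ∃ m, n = m + 1 := ⟨n - 1, by omega⟩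
    refine ⟨(x * x') ^ m * x, ?_⟩
    calc t = (x * x') ^ (m + 1) * t := habs.symm
      _ = ((x * x') ^ m * (x * x')) * t := by rw [pow_succ]
      _ = ((x * x') ^ m * x) * (x' * t) := by simp only [mul_assoc]
      _ = ((x * x') ^ m * x) * s := by rw [← hx']
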